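/- Assume the primal-dual pair {(P),(D)} (with data c ∈ X*, b ∈ Y*) is consistent and the value v of the game G = (α,β,A) (for some α ∈ int C*, β ∈ int K*) equals 0. Then the sets S ∩ {x ∈ X : Ax ∈ K*} and T ∩ {y ∈ Y : −A*y ∈ C*} are nonempty; moreover, every x ∈ S with Ax ∈ K* satisfies ⟨c,x⟩ ≥ 0, and every y ∈ T with −A*y ∈ C* satisfies ⟨y,b⟩ ≤ 0. -/

import Mathlib

set_option synthInstance.maxHeartbeats 1000000
set_option maxHeartbeats 1000000

open NormedSpace Metric Set

private lemma aux_int {E : Type*} [NormedAddCommGroup E] [NormedSpace ℝ E]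
    (C : Set E) (α : E →L[ℝ] ℝ)
    (hα : α ∈ interior {w : E →L[ℝ] ℝ | ∀ x ∈ C, 0 ≤ w x}) :
    ∃ ε > 0, ∀ x ∈ C, ε * ‖x‖ ≤ α x := by
  rw [mem_interior_iff_mem_nhds, Metric.mem_nhds_iff] at hα
  obtain ⟨ε, hε, hball⟩ := hα
  refine ⟨ε/2, by linarith, fun x hx => ?_⟩
  rcases eq_or_ne x 0 with rfl|hx0
  · simp
  · obtain ⟨g, hg1, hgx⟩ := exists_dual_vector ℝ x (norm_ne_zero_iff.mpr hx0)
    have hmem : α - (ε/2) • g ∈ ball α ε := by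
      rw [mem_ball, dist_eq_norm]
      have h1 : α - (ε/2) • g - α = -((ε/2) • g) := by abel
      rw [h1, norm_neg]
      have hns := norm_smul (ε/2) g
      rw [hns, hg1, Real.norm_eq_abs, abs_of_pos (by linarith : (0:ℝ) < ε/2)]
      linarith
    have h0 : 0 ≤ (α - (ε/2) • g) x := hball hmem x hx
    simp only [ContinuousLinearMap.sub_apply, ContinuousLinearMap.smul_apply, smul_eq_mul] at h0
    rw [hgx] at h0
    simp at h0 ⊢
    linarith

private lemma aux_compact {E : Type*} [NormedAddCommGroup E] [NormedSpace ℝ E]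
    (hrefl : Function.Surjective (inclusionInDoubleDual ℝ E))
    (S : Set E) (hconv : Convex ℝ S) (hclosed : IsClosed S) (R : ℝ)
    (hbound : ∀ x ∈ S, ‖x‖ ≤ R) :
    IsCompact ((fun x => StrongDual.toWeakDual (inclusionInDoubleDual ℝ E x)) '' S) := by
  set J : E → WeakDual ℝ (StrongDual ℝ E) := fun x => StrongDual.toWeakDual (inclusionInDoubleDual ℝ E x)
    with hJ
  have hsub : J '' S ⊆ WeakDual.toStrongDual ⁻¹' closedBall 0 R := by
    rintro ψ ⟨x, hx, rfl⟩
    simp only [mem_preimage, mem_closedBall_zero_iff]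
    show WeakDual.toStrongDual (J x) ∈ closedBall (0 : StrongDual ℝ (StrongDual ℝ E)) R
    refine (mem_closedBall_zero_iff (E := StrongDual ℝ (StrongDual ℝ E))).mpr ?_
    calc ‖WeakDual.toStrongDual (J x)‖ = ‖inclusionInDoubleDual ℝ E x‖ := rfl
      _ ≤ ‖x‖ := double_dual_bound ℝ E x
      _ ≤ R := hbound x hx
  have hcl : IsClosed (J '' S) := by
    rw [← isOpen_compl_iff, isOpen_iff_mem_nhds]
    intro ψ hψ
    obtain ⟨x, hx⟩ := hrefl (WeakDual.toStrongDual ψ)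
    have hψx : ψ = J x := by
      rw [hJ]; simp only; rw [hx]; rfl
    have hxS : x ∉ S := fun h => hψ ⟨x, h, hψx.symm⟩
    obtain ⟨f, u, hfu, hux⟩ := geometric_hahn_banach_closed_point hconv hclosed hxS
    have hopen : IsOpen {φ : WeakDual ℝ (StrongDual ℝ E) | u < φ f} :=
      (isOpen_Ioi).preimage (WeakDual.eval_continuous f)
    refine Filter.mem_of_superset (hopen.mem_nhds ?_) ?_
    · show u < ψ f
      rw [hψx]; exact hux
    · rintro φ hφ ⟨a, haS, rfl⟩
      exact absurd (hfu a haS) (not_lt.2 (le_of_lt hφ))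
  exact (WeakDual.isCompact_closedBall (𝕜 := ℝ) (E := StrongDual ℝ E) 0 R).of_isClosed_subset hcl hsub

theorem stmt14
    {X Y : Type*} [NormedAddCommGroup X] [NormedSpace ℝ X] [CompleteSpace X]
    [NormedAddCommGroup Y] [NormedSpace ℝ Y] [CompleteSpace Y]
    -- reflexivity of X and Y
    (hXrefl : Function.Surjective (NormedSpace.inclusionInDoubleDual ℝ X))
    (hYrefl : Function.Surjective (NormedSpace.inclusionInDoubleDual ℝ Y))
    (A : X →L[ℝ] (Y →L[ℝ] ℝ))
    -- closed convex cones C, K with solid dual cones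
    (C : Set X) (K : Set Y)
    (hCcone : ∀ (r : ℝ), 0 ≤ r → ∀ x ∈ C, r • x ∈ C) (hCconv : Convex ℝ C)
    (hCclosed : IsClosed C)
    (hKcone : ∀ (r : ℝ), 0 ≤ r → ∀ y ∈ K, r • y ∈ K) (hKconv : Convex ℝ K)
    (hKclosed : IsClosed K)
    (Cstar : Set (X →L[ℝ] ℝ)) (hCstar : Cstar = {w : X →L[ℝ] ℝ | ∀ x ∈ C, 0 ≤ w x})
    (Kstar : Set (Y →L[ℝ] ℝ)) (hKstar : Kstar = {z : Y →L[ℝ] ℝ | ∀ y ∈ K, 0 ≤ z y})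
    -- data of the programs and consistency
    (c : X →L[ℝ] ℝ) (b : Y →L[ℝ] ℝ)
    (FeasP : Set X) (hFeasP : FeasP = {x | x ∈ C ∧ A x - b ∈ Kstar})
    (FeasD : Set Y) (hFeasD : FeasD = {y | y ∈ K ∧ -(A.flip y) + c ∈ Cstar})
    (hPne : FeasP.Nonempty) (hDne : FeasD.Nonempty)
    -- the game G = (α,β,A) with α ∈ int C*, β ∈ int K*
    (α : X →L[ℝ] ℝ) (hα : α ∈ interior Cstar)
    (β : Y →L[ℝ] ℝ) (hβ : β ∈ interior Kstar)
    (S : Set X) (hS : S = {x ∈ C | α x = 1})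
    (T : Set Y) (hT : T = {y ∈ K | β y = 1})
    -- finite security levels (F3)
    (hSne : S.Nonempty) (hTne : T.Nonempty)
    (hbb : ∀ x ∈ S, BddBelow ((fun y => A x y) '' T))
    (hba : BddAbove ((fun x => sInf ((fun y => A x y) '' T)) '' S))
    (hba' : ∀ y ∈ T, BddAbove ((fun x => A x y) '' S))
    (hbb' : BddBelow ((fun y => sSup ((fun x => A x y) '' S)) '' T))
    -- v is the value of the game
    (v : ℝ)
    (hv : v = sSup ((fun x => sInf ((fun y => A x y) '' T)) '' S))
    (hv' : v = sInf ((fun y => sSup ((fun x => A x y) '' S)) '' T))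
    -- hypothesis: the game value is 0
    (hv0 : v = 0) :
    (S ∩ {x : X | A x ∈ Kstar}).Nonempty ∧
    (T ∩ {y : Y | -(A.flip y) ∈ Cstar}).Nonempty ∧
    (∀ x ∈ S, A x ∈ Kstar → 0 ≤ c x) ∧
    (∀ y ∈ T, -(A.flip y) ∈ Cstar → b y ≤ 0) := by
  -- interior bounds
  rw [hCstar] at hα
  rw [hKstar] at hβ
  obtain ⟨εα, hεα, hαb⟩ := aux_int C α hα
  obtain ⟨εβ, hεβ, hβb⟩ := aux_int K β hβ
  -- feasible points
  obtain ⟨x0, hx0⟩ := hPne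
  rw [hFeasP] at hx0
  obtain ⟨hx0C, hx0K⟩ := hx0
  obtain ⟨y0, hy0⟩ := hDne
  rw [hFeasD] at hy0
  obtain ⟨hy0K, hy0c⟩ := hy0
  -- the two sup/inf identities with value 0
  have hSup : sSup ((fun x => sInf ((fun y => A x y) '' T)) '' S) = 0 := by rw [← hv, hv0]
  have hInf : sInf ((fun y => sSup ((fun x => A x y) '' S)) '' T) = 0 := by rw [← hv', hv0]
  -- δ n sequence
  set δ : ℕ → ℝ := fun n => ((n : ℝ) + 1)⁻¹ with hδ
  have hδpos : ∀ n, 0 < δ n := fun n => by positivity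
  have hδmono : ∀ n, δ (n + 1) ≤ δ n := by
    intro n
    apply inv_anti₀ (by positivity)
    push_cast; linarith
  -- convexity, closedness, boundedness of S and T
  have hSconv : Convex ℝ S := by
    rw [hS]
    intro p hp q hq a b' ha hb' hab
    refine ⟨hCconv hp.1 hq.1 ha hb' hab, ?_⟩
    rw [map_add, map_smul, map_smul, hp.2, hq.2, smul_eq_mul, smul_eq_mul, mul_one, mul_one]
    exact hab
  have hTconv : Convex ℝ T := by
    rw [hT]
    intro p hp q hq a b' ha hb' hab
    refine ⟨hKconv hp.1 hq.1 ha hb' hab, ?_⟩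
    rw [map_add, map_smul, map_smul, hp.2, hq.2, smul_eq_mul, smul_eq_mul, mul_one, mul_one]
    exact hab
  have hSclosed : IsClosed S := by
    rw [hS]
    exact hCclosed.inter (isClosed_eq α.continuous continuous_const)
  have hTclosed : IsClosed T := by
    rw [hT]
    exact hKclosed.inter (isClosed_eq β.continuous continuous_const)
  have hSbdd : ∀ x ∈ S, ‖x‖ ≤ 1 / εα := by
    intro x hx
    rw [hS] at hx
    have h1 := hαb x hx.1
    rw [hx.2] at h1
    rw [le_div_iff₀ hεα]
    linarith [mul_comm εα ‖x‖]
  have hTbdd : ∀ y ∈ T, ‖y‖ ≤ 1 / εβ := by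
    intro y hy
    rw [hT] at hy
    have h1 := hβb y hy.1
    rw [hy.2] at h1
    rw [le_div_iff₀ hεβ]
    linarith [mul_comm εβ ‖y‖]
  -- degenerate directions are zero
  have hzeroC : ∀ x ∈ C, α x = 0 → x = 0 := by
    intro x hx hx0'
    have h1 := hαb x hx
    rw [hx0'] at h1
    have : ‖x‖ = 0 := le_antisymm (by nlinarith [norm_nonneg x]) (norm_nonneg x)
    exact norm_eq_zero.mp this
  have hzeroK : ∀ y ∈ K, β y = 0 → y = 0 := by
    intro y hy hy0'
    have h1 := hβb y hy
    rw [hy0'] at h1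
    have : ‖y‖ = 0 := le_antisymm (by nlinarith [norm_nonneg y]) (norm_nonneg y)
    exact norm_eq_zero.mp this
  have hαnonneg : ∀ x ∈ C, 0 ≤ α x := fun x hx => le_trans (by positivity) (hαb x hx)
  have hβnonneg : ∀ y ∈ K, 0 ≤ β y := fun y hy => le_trans (by positivity) (hβb y hy)
  -- PART 1 : existence of x* ∈ S with A x* ∈ Kstar
  have part1 : (S ∩ {x : X | A x ∈ Kstar}).Nonempty := by
    have hScomp := aux_compact hXrefl S hSconv hSclosed (1 / εα) hSbdd
    set JX : X → WeakDual ℝ (StrongDual ℝ X) := fun x => StrongDual.toWeakDual (inclusionInDoubleDual ℝ X x)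
      with hJX
    set F : ℕ → Set (WeakDual ℝ (StrongDual ℝ X)) :=
      fun n => (JX '' S) ∩ {ψ | ∀ y ∈ T, -(δ n) ≤ ψ (A.flip y)} with hF
    have hFcl : ∀ n, IsClosed (F n) := by
      intro n
      apply hScomp.isClosed.inter
      have heq : {ψ : WeakDual ℝ (StrongDual ℝ X) | ∀ y ∈ T, -(δ n) ≤ ψ (A.flip y)} =
          ⋂ y ∈ T, {ψ : WeakDual ℝ (StrongDual ℝ X) | -(δ n) ≤ ψ (A.flip y)} := by
        ext ψ; simp
      rw [heq]
      exact isClosed_biInter fun y _ =>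
        isClosed_le continuous_const (WeakDual.eval_continuous (A.flip y))
    have hFnest : ∀ n, F (n + 1) ⊆ F n := by
      rintro n ψ ⟨h1, h2⟩
      refine ⟨h1, fun y hy => le_trans ?_ (h2 y hy)⟩
      have := hδmono n
      linarith
    have hFne : ∀ n, (F n).Nonempty := by
      intro n
      have h0 : (-(δ n) : ℝ) < sSup ((fun x => sInf ((fun y => A x y) '' T)) '' S) := by
        rw [hSup]; linarith [hδpos n]
      obtain ⟨a, ha, hax⟩ := exists_lt_of_lt_csSup (hSne.image _) h0
      obtain ⟨x, hxS, rfl⟩ := ha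
      refine ⟨JX x, ⟨x, hxS, rfl⟩, fun y hy => ?_⟩
      have h1 : sInf ((fun y => A x y) '' T) ≤ A x y := csInf_le (hbb x hxS) ⟨y, hy, rfl⟩
      have h2 : JX x (A.flip y) = A x y := rfl
      rw [h2]; linarith
    have hF0comp : IsCompact (F 0) := hScomp.of_isClosed_subset (hFcl 0) inter_subset_left
    obtain ⟨ψ, hψ⟩ :=
      IsCompact.nonempty_iInter_of_sequence_nonempty_isCompact_isClosed F hFnest hFne hF0comp hFcl
    rw [mem_iInter] at hψ
    obtain ⟨x, hxS, hJx⟩ := (hψ 0).1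
    have hevery : ∀ y ∈ T, 0 ≤ A x y := by
      intro y hy
      by_contra hneg
      push_neg at hneg
      obtain ⟨n, hn⟩ := exists_nat_one_div_lt (show (0:ℝ) < -(A x y) by linarith)
      have h1 : -(δ n) ≤ ψ (A.flip y) := (hψ n).2 y hy
      have h2 : ψ (A.flip y) = A x y := by rw [← hJx]; rfl
      rw [h2] at h1
      rw [one_div] at hn
      have : δ n = ((n:ℝ) + 1)⁻¹ := rfl
      rw [this] at h1
      linarith
    refine ⟨x, hxS, ?_⟩
    show A x ∈ Kstar
    rw [hKstar]
    intro y hyK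
    by_cases hβy : β y = 0
    · rw [hzeroK y hyK hβy]
      simp
    · have hβypos : 0 < β y := lt_of_le_of_ne (hβnonneg y hyK) (Ne.symm hβy)
      set y' := (β y)⁻¹ • y with hy'
      have hy'T : y' ∈ T := by
        rw [hT]
        refine ⟨hKcone _ (inv_nonneg.2 hβypos.le) y hyK, ?_⟩
        rw [hy', map_smul, smul_eq_mul, inv_mul_cancel₀ hβy]
      have h0 := hevery y' hy'T
      have hyy : A x y = β y * A x y' := by
        rw [hy', map_smul, smul_eq_mul, ← mul_assoc, mul_inv_cancel₀ hβy, one_mul]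
      rw [hyy]
      exact mul_nonneg hβypos.le h0
  -- PART 2 : existence of y* ∈ T with -(A* y*) ∈ Cstar
  have part2 : (T ∩ {y : Y | -(A.flip y) ∈ Cstar}).Nonempty := by
    have hTcomp := aux_compact hYrefl T hTconv hTclosed (1 / εβ) hTbdd
    set JY : Y → WeakDual ℝ (StrongDual ℝ Y) := fun y => StrongDual.toWeakDual (inclusionInDoubleDual ℝ Y y)
      with hJY
    set G : ℕ → Set (WeakDual ℝ (StrongDual ℝ Y)) :=
      fun n => (JY '' T) ∩ {ψ | ∀ x ∈ S, ψ (A x) ≤ δ n} with hG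
    have hGcl : ∀ n, IsClosed (G n) := by
      intro n
      apply hTcomp.isClosed.inter
      have heq : {ψ : WeakDual ℝ (StrongDual ℝ Y) | ∀ x ∈ S, ψ (A x) ≤ δ n} =
          ⋂ x ∈ S, {ψ : WeakDual ℝ (StrongDual ℝ Y) | ψ (A x) ≤ δ n} := by
        ext ψ; simp
      rw [heq]
      exact isClosed_biInter fun x _ =>
        isClosed_le (WeakDual.eval_continuous (A x)) continuous_const
    have hGnest : ∀ n, G (n + 1) ⊆ G n := by
      rintro n ψ ⟨h1, h2⟩
      refine ⟨h1, fun x hx => le_trans (h2 x hx) ?_⟩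
      exact hδmono n
    have hGne : ∀ n, (G n).Nonempty := by
      intro n
      have h0 : sInf ((fun y => sSup ((fun x => A x y) '' S)) '' T) < δ n := by
        rw [hInf]; exact hδpos n
      obtain ⟨a, ha, hax⟩ := exists_lt_of_csInf_lt (hTne.image _) h0
      obtain ⟨y, hyT, rfl⟩ := ha
      refine ⟨JY y, ⟨y, hyT, rfl⟩, fun x hx => ?_⟩
      have h1 : A x y ≤ sSup ((fun x => A x y) '' S) := le_csSup (hba' y hyT) ⟨x, hx, rfl⟩
      have h2 : JY y (A x) = A x y := rfl
      rw [h2]; linarith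
    have hG0comp : IsCompact (G 0) := hTcomp.of_isClosed_subset (hGcl 0) inter_subset_left
    obtain ⟨ψ, hψ⟩ :=
      IsCompact.nonempty_iInter_of_sequence_nonempty_isCompact_isClosed G hGnest hGne hG0comp hGcl
    rw [mem_iInter] at hψ
    obtain ⟨y, hyT, hJy⟩ := (hψ 0).1
    have hevery : ∀ x ∈ S, A x y ≤ 0 := by
      intro x hx
      by_contra hneg
      push_neg at hneg
      obtain ⟨n, hn⟩ := exists_nat_one_div_lt hneg
      have h1 : ψ (A x) ≤ δ n := (hψ n).2 x hx
      have h2 : ψ (A x) = A x y := by rw [← hJy]; rfl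
      rw [h2] at h1
      rw [one_div] at hn
      have : δ n = ((n:ℝ) + 1)⁻¹ := rfl
      rw [this] at h1
      linarith
    refine ⟨y, hyT, ?_⟩
    show -(A.flip y) ∈ Cstar
    rw [hCstar]
    intro x hxC
    simp only [ContinuousLinearMap.neg_apply, ContinuousLinearMap.flip_apply]
    rw [neg_nonneg]
    by_cases hαx : α x = 0
    · rw [hzeroC x hxC hαx]
      simp
    · have hαxpos : 0 < α x := lt_of_le_of_ne (hαnonneg x hxC) (Ne.symm hαx)
      set x' := (α x)⁻¹ • x with hx'
      have hx'S : x' ∈ S := by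
        rw [hS]
        refine ⟨hCcone _ (inv_nonneg.2 hαxpos.le) x hxC, ?_⟩
        rw [hx', map_smul, smul_eq_mul, inv_mul_cancel₀ hαx]
      have h0 := hevery x' hx'S
      have hxx : A x y = α x * A x' y := by
        rw [hx', map_smul, ContinuousLinearMap.smul_apply, smul_eq_mul, ← mul_assoc,
          mul_inv_cancel₀ hαx, one_mul]
      rw [hxx]
      exact mul_nonpos_of_nonneg_of_nonpos hαxpos.le h0
  -- PART 3 & 4
  refine ⟨part1, part2, ?_, ?_⟩
  · intro x hx hAx
    have hxC : x ∈ C := by rw [hS] at hx; exact hx.1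
    have h1 : 0 ≤ (-(A.flip y0) + c) x := by
      rw [hCstar] at hy0c; exact hy0c x hxC
    have h2 : 0 ≤ A x y0 := by
      rw [hKstar] at hAx; exact hAx y0 hy0K
    simp only [ContinuousLinearMap.add_apply, ContinuousLinearMap.neg_apply,
      ContinuousLinearMap.flip_apply] at h1
    linarith
  · intro y hy hAy
    have hyK : y ∈ K := by rw [hT] at hy; exact hy.1
    have h1 : 0 ≤ (A x0 - b) y := by
      rw [hKstar] at hx0K; exact hx0K y hyK
    have h2 : 0 ≤ (-(A.flip y)) x0 := by
      rw [hCstar] at hAy; exact hAy x0 hx0C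
    simp only [ContinuousLinearMap.sub_apply, ContinuousLinearMap.neg_apply,
      ContinuousLinearMap.flip_apply] at h1 h2
    linarith
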